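/- Let G be a finite simple graph on n ≥ 1 vertices, identified with [n], and suppose G admits a k-dimensional orthogonal representation. Then there exists a real symmetric positive semidefinite (n+1)×(n+1) matrix M (rows and columns indexed by {1,…,n+1}) such that: all entries of M are nonnegative; M_{1,1} = k; M_{1,i+1} = M_{i+1,i+1} = 1 for all i ∈ [n]; Σ_{i∈S} M_{i+1,j+1} ≤ 1 for every clique S of G and every j ∈ [n]; and M_{1,1} + Σ_{i∈S, j∈T} M_{i+1,j+1} ≥ |S| + |T| for all cliques S, T of G. In particular, the optimal value ξ_SDP(G) of the semidefinite program minimizing M_{1,1} over such matrices satisfies ξ_SDP(G) ≤ ξ(G). -/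

import Mathlib

open scoped ComplexConjugate

/-- The standard (conjugate-linear in the first argument) inner product on `ι → ℂ`. -/
noncomputable def cdot {ι : Type} [Fintype ι] (x y : ι → ℂ) : ℂ :=
  ∑ i, conj (x i) * y i

/-- A `k`-dimensional (complex) orthogonal representation of a graph. -/
def IsOrthRep {V : Type} (G : SimpleGraph V) (k : ℕ) (ψ : V → Fin k → ℂ) : Prop :=
  (∀ v, cdot (ψ v) (ψ v) = 1) ∧ ∀ u v, G.Adj u v → cdot (ψ u) (ψ v) = 0

/-- The orthogonal rank `ξ(G)`: the least `k ≥ 1` admitting a `k`-dimensional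
orthogonal representation. -/
noncomputable def orthRank {V : Type} (G : SimpleGraph V) : ℕ :=
  sInf {k | 1 ≤ k ∧ ∃ ψ : V → Fin k → ℂ, IsOrthRep G k ψ}

/-- A quantum `k`-colouring of `G` on `ℂ^d`: projective measurements
`{E v c}_{c ∈ Fin k}` such that `E u c * E v c = 0` for adjacent `u, v`. -/
def IsQuantumColoring {V : Type} (G : SimpleGraph V) (k d : ℕ)
    (E : V → Fin k → Matrix (Fin d) (Fin d) ℂ) : Prop :=
  (∀ v c, (E v c).IsHermitian) ∧
  (∀ v c, E v c * E v c = E v c) ∧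
  (∀ v, ∑ c, E v c = 1) ∧
  ∀ u v, G.Adj u v → ∀ c, E u c * E v c = 0

/-- The quantum chromatic number `χ_q(G)`: the least `k ≥ 1` for which a quantum
`k`-colouring exists on `ℂ^d` for some `d ≥ 1`. -/
noncomputable def quantumChromaticNumber {V : Type} (G : SimpleGraph V) : ℕ :=
  sInf {k | 1 ≤ k ∧ ∃ d, 1 ≤ d ∧
    ∃ E : V → Fin k → Matrix (Fin d) (Fin d) ℂ, IsQuantumColoring G k d E}

/-- A rank-`r` quantum `k`-colouring: a quantum `k`-colouring on `ℂ^(r*k)` in which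
every projector has rank exactly `r`. -/
def IsRankRQuantumColoring {V : Type} (G : SimpleGraph V) (r k : ℕ)
    (E : V → Fin k → Matrix (Fin (r * k)) (Fin (r * k)) ℂ) : Prop :=
  IsQuantumColoring G k (r * k) E ∧ ∀ v c, (E v c).rank = r

/-- The rank-`r` quantum chromatic number `χ_q^{(r)}(G)`. -/
noncomputable def rankChromaticNumber {V : Type} (G : SimpleGraph V) (r : ℕ) : ℕ :=
  sInf {k | 1 ≤ k ∧ ∃ E : V → Fin k → Matrix (Fin (r * k)) (Fin (r * k)) ℂ,
    IsRankRQuantumColoring G r k E}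

/-- The chromatic number of `G` as a natural number: the least `k ≥ 1` for which a
proper `k`-colouring exists. -/
noncomputable def chromNat {V : Type} (G : SimpleGraph V) : ℕ :=
  sInf {k | 1 ≤ k ∧ G.Colorable k}

/-- The clique number `ω(G)`. -/
noncomputable def cliqueNum' {V : Type} (G : SimpleGraph V) : ℕ :=
  sSup {n | ∃ S : Finset V, G.IsNClique n S}

/-- Feasibility for the semidefinite program defining `ξ_SDP(G)`, for a graph on
vertex set `[n] = Fin n`; row/column `0` of `M` is the distinguished index. -/
def FeasibleSDP {n : ℕ} (G : SimpleGraph (Fin n))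
    (M : Matrix (Fin (n + 1)) (Fin (n + 1)) ℝ) : Prop :=
  M.IsSymm ∧ M.PosSemidef ∧
  (∀ i j, 0 ≤ M i j) ∧
  (∀ i : Fin n, M 0 i.succ = 1 ∧ M i.succ i.succ = 1) ∧
  (∀ S : Finset (Fin n), G.IsClique (S : Set (Fin n)) →
    ∀ j : Fin n, ∑ i ∈ S, M i.succ j.succ ≤ 1) ∧
  ∀ S T : Finset (Fin n), G.IsClique (S : Set (Fin n)) → G.IsClique (T : Set (Fin n)) →
    (S.card + T.card : ℝ) ≤ M 0 0 + ∑ i ∈ S, ∑ j ∈ T, M i.succ j.succ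

/-- `ξ_SDP(G)`: the optimal value of the semidefinite program minimizing `M 0 0`
over feasible matrices. -/
noncomputable def xiSDP {n : ℕ} (G : SimpleGraph (Fin n)) : ℝ :=
  sInf {x : ℝ | ∃ M, FeasibleSDP G M ∧ M 0 0 = x}


section AuxOrthRepSDP

open scoped Matrix

variable {n k : ℕ}

private lemma aux_trace_mul_conjTranspose_re_nonneg (B : Matrix (Fin k) (Fin k) ℂ) :
    0 ≤ ((B * Bᴴ).trace).re := by
  have h : ((B * Bᴴ).trace) = ∑ a, ∑ b, ((Complex.normSq (B a b) : ℝ) : ℂ) := by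
    simp only [Matrix.trace, Matrix.diag, Matrix.mul_apply, Matrix.conjTranspose_apply]
    refine Finset.sum_congr rfl fun a _ => Finset.sum_congr rfl fun b _ => ?_
    rw [← Complex.mul_conj]
    rfl
  rw [h, Complex.re_sum]
  refine Finset.sum_nonneg fun a _ => ?_
  rw [Complex.re_sum]
  refine Finset.sum_nonneg fun b _ => ?_
  rw [Complex.ofReal_re]
  exact Complex.normSq_nonneg _

private lemma aux_trace_proj_nonneg (Q R : Matrix (Fin k) (Fin k) ℂ) (hQ : Qᴴ = Q)
    (hR : Rᴴ = R) (hQ2 : Q * Q = Q) (hR2 : R * R = R) : 0 ≤ ((Q * R).trace).re := by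
  have h : (Q * R).trace = ((Q * R) * (Q * R)ᴴ).trace := by
    rw [Matrix.conjTranspose_mul, hQ, hR]
    calc (Q * R).trace = ((Q * Q) * (R * R)).trace := by rw [hQ2, hR2]
      _ = ((Q * (R * R)) * Q).trace := by rw [Matrix.mul_assoc, Matrix.trace_mul_comm]
      _ = (Q * R * (R * Q)).trace := by simp only [Matrix.mul_assoc]
  rw [h]
  exact aux_trace_mul_conjTranspose_re_nonneg _

/-- The rank-one projector onto `ψ i`. -/
private def Pm (ψ : Fin n → Fin k → ℂ) (i : Fin n) : Matrix (Fin k) (Fin k) ℂ :=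
  Matrix.of fun a b => ψ i a * conj (ψ i b)

private lemma Pm_conjTranspose (ψ : Fin n → Fin k → ℂ) (i : Fin n) :
    (Pm ψ i)ᴴ = Pm ψ i := by
  ext a b
  simp only [Matrix.conjTranspose_apply, Pm, Matrix.of_apply, star_mul', Complex.star_def,
    Complex.conj_conj]
  ring

private lemma Pm_mul_apply (ψ : Fin n → Fin k → ℂ) (i j : Fin n) (a b : Fin k) :
    (Pm ψ i * Pm ψ j) a b = cdot (ψ i) (ψ j) * (ψ i a * conj (ψ j b)) := by
  simp only [Matrix.mul_apply, Pm, Matrix.of_apply, cdot, Finset.sum_mul]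
  exact Finset.sum_congr rfl fun c _ => by ring

private lemma Pm_trace (ψ : Fin n → Fin k → ℂ) (i : Fin n) :
    (Pm ψ i).trace = cdot (ψ i) (ψ i) := by
  simp only [Matrix.trace, Matrix.diag_apply, Pm, Matrix.of_apply, cdot]
  exact Finset.sum_congr rfl fun a _ => mul_comm _ _

private lemma Pm_mul_trace (ψ : Fin n → Fin k → ℂ) (i j : Fin n) :
    (Pm ψ i * Pm ψ j).trace = ((Complex.normSq (cdot (ψ i) (ψ j)) : ℝ) : ℂ) := by
  simp only [Matrix.trace, Matrix.diag_apply, Pm_mul_apply]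
  rw [← Finset.mul_sum]
  have h : ∑ a, ψ i a * conj (ψ j a) = conj (cdot (ψ i) (ψ j)) := by
    simp only [cdot, map_sum, map_mul, Complex.conj_conj]
  rw [h, Complex.mul_conj]

private lemma Pm_mul_self (ψ : Fin n → Fin k → ℂ) (i : Fin n) (h : cdot (ψ i) (ψ i) = 1) :
    Pm ψ i * Pm ψ i = Pm ψ i := by
  ext a b
  rw [Pm_mul_apply, h, one_mul]
  rfl

private lemma Pm_mul_eq_zero (ψ : Fin n → Fin k → ℂ) (i j : Fin n)
    (h : cdot (ψ i) (ψ j) = 0) : Pm ψ i * Pm ψ j = 0 := by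
  ext a b
  rw [Pm_mul_apply, h, zero_mul, Matrix.zero_apply]

/-- `Am ψ 0 = 1`, `Am ψ i.succ = Pm ψ i`. -/
private def Am (ψ : Fin n → Fin k → ℂ) : Fin (n + 1) → Matrix (Fin k) (Fin k) ℂ :=
  Fin.cases 1 (Pm ψ)

private lemma Am_zero (ψ : Fin n → Fin k → ℂ) : Am ψ 0 = 1 := rfl

private lemma Am_succ (ψ : Fin n → Fin k → ℂ) (i : Fin n) : Am ψ i.succ = Pm ψ i := by
  simp [Am]

private lemma Am_conjTranspose (ψ : Fin n → Fin k → ℂ) (i : Fin (n + 1)) :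
    (Am ψ i)ᴴ = Am ψ i := by
  induction i using Fin.cases with
  | zero => rw [Am_zero, Matrix.conjTranspose_one]
  | succ i => rw [Am_succ]; exact Pm_conjTranspose ψ i

/-- The SDP matrix built from an orthogonal representation. -/
private noncomputable def Mm (ψ : Fin n → Fin k → ℂ) :
    Matrix (Fin (n + 1)) (Fin (n + 1)) ℝ :=
  Matrix.of fun i j => ((Am ψ i * Am ψ j).trace).re

private lemma Mm_apply (ψ : Fin n → Fin k → ℂ) (i j : Fin (n + 1)) :
    Mm ψ i j = ((Am ψ i * Am ψ j).trace).re := rfl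

private lemma Mm_zero_zero (ψ : Fin n → Fin k → ℂ) : Mm ψ 0 0 = (k : ℝ) := by
  rw [Mm_apply, Am_zero, Matrix.one_mul, Matrix.trace_one]
  simp

private lemma Mm_zero_succ (ψ : Fin n → Fin k → ℂ) (j : Fin n)
    (h : cdot (ψ j) (ψ j) = 1) : Mm ψ 0 j.succ = 1 := by
  rw [Mm_apply, Am_zero, Am_succ, Matrix.one_mul, Pm_trace, h, Complex.one_re]

private lemma Mm_succ_zero (ψ : Fin n → Fin k → ℂ) (i : Fin n)
    (h : cdot (ψ i) (ψ i) = 1) : Mm ψ i.succ 0 = 1 := by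
  rw [Mm_apply, Am_zero, Am_succ, Matrix.mul_one, Pm_trace, h, Complex.one_re]

private lemma Mm_succ_succ (ψ : Fin n → Fin k → ℂ) (i j : Fin n) :
    Mm ψ i.succ j.succ = Complex.normSq (cdot (ψ i) (ψ j)) := by
  rw [Mm_apply, Am_succ, Am_succ, Pm_mul_trace, Complex.ofReal_re]

private lemma clique_proj {G : SimpleGraph (Fin n)} {ψ : Fin n → Fin k → ℂ}
    (hψ : IsOrthRep G k ψ) {S : Finset (Fin n)} (hS : G.IsClique (S : Set (Fin n))) :
    (∑ i ∈ S, Pm ψ i) * (∑ i ∈ S, Pm ψ i) = ∑ i ∈ S, Pm ψ i := by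
  rw [Finset.sum_mul_sum]
  refine Finset.sum_congr rfl fun i hi => ?_
  refine Finset.sum_eq_single_of_mem i hi (fun j hj hne => ?_) |>.trans
    (Pm_mul_self ψ i (hψ.1 i))
  exact Pm_mul_eq_zero ψ i j (hψ.2 i j (hS (Finset.mem_coe.mpr hi) (Finset.mem_coe.mpr hj)
    (Ne.symm hne)))

private lemma clique_proj_herm (ψ : Fin n → Fin k → ℂ) (S : Finset (Fin n)) :
    (∑ i ∈ S, Pm ψ i)ᴴ = ∑ i ∈ S, Pm ψ i := by
  rw [Matrix.conjTranspose_sum]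
  exact Finset.sum_congr rfl fun i _ => Pm_conjTranspose ψ i

private lemma clique_proj_trace {G : SimpleGraph (Fin n)} {ψ : Fin n → Fin k → ℂ}
    (hψ : IsOrthRep G k ψ) (S : Finset (Fin n)) :
    (∑ i ∈ S, Pm ψ i).trace = (S.card : ℂ) := by
  rw [Matrix.trace_sum]
  rw [Finset.sum_congr rfl fun i _ => (Pm_trace ψ i).trans (hψ.1 i)]
  simp

private lemma one_sub_herm (ψ : Fin n → Fin k → ℂ) (S : Finset (Fin n)) :
    ((1 : Matrix (Fin k) (Fin k) ℂ) - ∑ i ∈ S, Pm ψ i)ᴴ = 1 - ∑ i ∈ S, Pm ψ i := by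
  rw [Matrix.conjTranspose_sub, Matrix.conjTranspose_one, clique_proj_herm]

private lemma one_sub_idem {G : SimpleGraph (Fin n)} {ψ : Fin n → Fin k → ℂ}
    (hψ : IsOrthRep G k ψ) {S : Finset (Fin n)} (hS : G.IsClique (S : Set (Fin n))) :
    ((1 : Matrix (Fin k) (Fin k) ℂ) - ∑ i ∈ S, Pm ψ i) * (1 - ∑ i ∈ S, Pm ψ i)
      = 1 - ∑ i ∈ S, Pm ψ i := by
  rw [sub_mul, one_mul, mul_sub, mul_one, clique_proj hψ hS]
  abel

private lemma exists_feasible {n k : ℕ} (G : SimpleGraph (Fin n)) (ψ : Fin n → Fin k → ℂ)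
    (hψ : IsOrthRep G k ψ) :
    ∃ M : Matrix (Fin (n + 1)) (Fin (n + 1)) ℝ, FeasibleSDP G M ∧ M 0 0 = (k : ℝ) := by
  refine ⟨Mm ψ, ⟨?_, ?_, ?_, ?_, ?_, ?_⟩, Mm_zero_zero ψ⟩
  · -- IsSymm
    ext i j
    rw [Matrix.transpose_apply, Mm_apply, Mm_apply, Matrix.trace_mul_comm]
  · -- PosSemidef
    constructor
    · ext i j
      rw [Matrix.conjTranspose_apply, Mm_apply, Mm_apply, star_trivial,
        Matrix.trace_mul_comm]
    · intro x
      have hd : (x.sum fun i xi => x.sum fun j xj => star xi * Mm ψ i j * xj)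
          = ∑ i, ∑ j, x i * x j * ((Am ψ i * Am ψ j).trace).re := by
        rw [Finsupp.sum_fintype _ _ (fun _ => by simp)]
        refine Finset.sum_congr rfl fun i _ => ?_
        rw [Finsupp.sum_fintype _ _ (fun _ => by simp)]
        refine Finset.sum_congr rfl fun j _ => ?_
        rw [star_trivial, Mm_apply]
        ring
      rw [hd]
      set B : Matrix (Fin k) (Fin k) ℂ := ∑ i, ((x i : ℂ)) • Am ψ i with hB
      have hBB : (B * B).trace
          = ∑ i, ∑ j, ((x i * x j : ℝ) : ℂ) * (Am ψ i * Am ψ j).trace := by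
        rw [hB, Finset.sum_mul_sum]
        rw [Matrix.trace_sum]
        refine Finset.sum_congr rfl fun i _ => ?_
        rw [Matrix.trace_sum]
        refine Finset.sum_congr rfl fun j _ => ?_
        rw [smul_mul_assoc, mul_smul_comm, smul_smul, Matrix.trace_smul, smul_eq_mul]
        push_cast
        ring
      have hBh : Bᴴ = B := by
        rw [hB, Matrix.conjTranspose_sum]
        refine Finset.sum_congr rfl fun i _ => ?_
        rw [Matrix.conjTranspose_smul, Am_conjTranspose, Complex.star_def,
          Complex.conj_ofReal]
      have h0 : 0 ≤ ((B * B).trace).re := by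
        have := aux_trace_mul_conjTranspose_re_nonneg B
        rwa [hBh] at this
      rw [hBB] at h0
      simpa only [Complex.re_sum, Complex.re_ofReal_mul] using h0
  · -- nonneg entries
    intro i j
    induction i using Fin.cases with
    | zero =>
      induction j using Fin.cases with
      | zero => rw [Mm_zero_zero]; positivity
      | succ j => rw [Mm_zero_succ ψ j (hψ.1 j)]; norm_num
    | succ i =>
      induction j using Fin.cases with
      | zero => rw [Mm_succ_zero ψ i (hψ.1 i)]; norm_num
      | succ j => rw [Mm_succ_succ]; exact Complex.normSq_nonneg _
  · -- row 0 and diagonal values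
    intro i
    refine ⟨Mm_zero_succ ψ i (hψ.1 i), ?_⟩
    rw [Mm_succ_succ, hψ.1 i]
    simp [Complex.normSq]
  · -- clique constraint 1
    intro S hS j
    have h0 : 0 ≤ (((1 - ∑ i ∈ S, Pm ψ i) * Pm ψ j).trace).re :=
      aux_trace_proj_nonneg _ _ (one_sub_herm ψ S) (Pm_conjTranspose ψ j)
        (one_sub_idem hψ hS) (Pm_mul_self ψ j (hψ.1 j))
    have hexp : ((1 - ∑ i ∈ S, Pm ψ i) * Pm ψ j).trace
        = ((1 - ∑ i ∈ S, Complex.normSq (cdot (ψ i) (ψ j)) : ℝ) : ℂ) := by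
      rw [sub_mul, one_mul, Matrix.trace_sub, Finset.sum_mul, Matrix.trace_sum,
        Pm_trace, hψ.1 j,
        Finset.sum_congr rfl fun i _ => Pm_mul_trace ψ i j]
      push_cast
      ring
    rw [hexp, Complex.ofReal_re] at h0
    have : ∑ i ∈ S, Mm ψ i.succ j.succ = ∑ i ∈ S, Complex.normSq (cdot (ψ i) (ψ j)) :=
      Finset.sum_congr rfl fun i _ => Mm_succ_succ ψ i j
    rw [this]
    linarith
  · -- clique constraint 2
    intro S T hS hT
    have h0 : 0 ≤ (((1 - ∑ i ∈ S, Pm ψ i) * (1 - ∑ j ∈ T, Pm ψ j)).trace).re :=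
      aux_trace_proj_nonneg _ _ (one_sub_herm ψ S) (one_sub_herm ψ T)
        (one_sub_idem hψ hS) (one_sub_idem hψ hT)
    have hexp : ((1 - ∑ i ∈ S, Pm ψ i) * (1 - ∑ j ∈ T, Pm ψ j)).trace
        = (((k : ℝ) - T.card - S.card
            + ∑ i ∈ S, ∑ j ∈ T, Complex.normSq (cdot (ψ i) (ψ j)) : ℝ) : ℂ) := by
      rw [sub_mul, one_mul, mul_sub, mul_one, Matrix.trace_sub, Matrix.trace_sub,
        Matrix.trace_sub, Matrix.trace_one, clique_proj_trace hψ S,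
        clique_proj_trace hψ T, Finset.sum_mul_sum, Matrix.trace_sum]
      rw [Finset.sum_congr rfl fun i _ => (Matrix.trace_sum T _).trans
        (Finset.sum_congr rfl fun j _ => Pm_mul_trace ψ i j)]
      simp only [Fintype.card_fin]
      push_cast
      ring
    rw [hexp, Complex.ofReal_re] at h0
    have hsum : ∑ i ∈ S, ∑ j ∈ T, Mm ψ i.succ j.succ
        = ∑ i ∈ S, ∑ j ∈ T, Complex.normSq (cdot (ψ i) (ψ j)) :=
      Finset.sum_congr rfl fun i _ => Finset.sum_congr rfl fun j _ => Mm_succ_succ ψ i j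
    rw [hsum, Mm_zero_zero]
    linarith

end AuxOrthRepSDP

/-- a `k`-dimensional orthogonal representation of a graph on
`n ≥ 1` vertices yields a feasible SDP solution with value exactly `k`; in
particular `ξ_SDP(G) ≤ ξ(G)`. -/
theorem xiSDP_le_orthRank {n : ℕ} (hn : 1 ≤ n) (G : SimpleGraph (Fin n))
    (k : ℕ) (ψ : Fin n → Fin k → ℂ) (hψ : IsOrthRep G k ψ) :
    (∃ M : Matrix (Fin (n + 1)) (Fin (n + 1)) ℝ,
      FeasibleSDP G M ∧ M 0 0 = (k : ℝ)) ∧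
    xiSDP G ≤ (orthRank G : ℝ) := by
  have k1 : 1 ≤ k := by
    by_contra h
    have hk0 : k = 0 := by omega
    subst hk0
    have h1 := hψ.1 ⟨0, hn⟩
    simp [cdot] at h1
  constructor
  · exact exists_feasible G ψ hψ
  · have hne : {m | 1 ≤ m ∧ ∃ φ : Fin n → Fin m → ℂ, IsOrthRep G m φ}.Nonempty :=
      ⟨k, k1, ψ, hψ⟩
    have hmem : orthRank G ∈ {m | 1 ≤ m ∧ ∃ φ : Fin n → Fin m → ℂ, IsOrthRep G m φ} :=
      Nat.sInf_mem hne
    obtain ⟨-, ψ', hψ'⟩ := hmem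
    obtain ⟨M, hM, hM0⟩ := exists_feasible G ψ' hψ'
    refine csInf_le ⟨0, ?_⟩ ⟨M, hM, hM0⟩
    rintro x ⟨M', hM', rfl⟩
    exact hM'.2.2.1 0 0
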